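/- arXiv:2307.11561 — 6 statements merged into one kernel-verified Lean document; each statement's English description precedes it below -/
import Mathlib

section
/- Let X be a Tychonoff (completely regular Hausdorff) space. Then X is a sequentially Ascoli space if and only if for every set Γ, every map T : X → ℓ∞(Γ) (real bounded functions on Γ with the sup norm) satisfying the following three conditions is continuous: (a) T is k-continuous; (b) for every a ∈ ℓ₁(Γ) the function x ↦ Σ_{γ∈Γ} a(γ)·T(x)(γ) is continuous on X; (c) there exist ε > 0 and a sequence (f_n) in C(X,ℝ) converging to 0 in C_k(X) such that for every a ∈ ℓ₁(Γ) with ‖a‖₁ ≤ ε the function x ↦ Σ_{γ∈Γ} a(γ)·T(x)(γ) belongs to the closure in C_k(X) of the absolutely convex hull of {f_n : n ∈ ℕ}. -/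
/-- `C_k(X)` is `C(X, ℝ)` with the compact-open topology (the default topology on
`ContinuousMap`s in Mathlib). A Tychonoff space `X` is *Ascoli* if every compact
subset of `C_k(X)` is equicontinuous. -/
def IsAscoli (X : Type*) [TopologicalSpace X] : Prop :=
  ∀ K : Set C(X, ℝ), IsCompact K → Equicontinuous fun f : K => ⇑f.1

/-- A Tychonoff space `X` is *sequentially Ascoli* if every convergent sequence in
`C_k(X)` is equicontinuous. -/
def IsSequentiallyAscoli (X : Type*) [TopologicalSpace X] : Prop :=
  ∀ (u : ℕ → C(X, ℝ)) (g : C(X, ℝ)),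
    Filter.Tendsto u Filter.atTop (nhds g) → Equicontinuous fun n => ⇑(u n)

/-- The absolutely convex hull of a set `K ⊆ C(X, ℝ)`: all finite sums `∑ λᵢ • fᵢ`
with `fᵢ ∈ K` and `∑ |λᵢ| ≤ 1`. -/
def absConvexHullOf {X : Type*} [TopologicalSpace X] (K : Set C(X, ℝ)) : Set C(X, ℝ) :=
  {g | ∃ (n : ℕ) (c : Fin n → ℝ) (f : Fin n → C(X, ℝ)),
    (∀ i, f i ∈ K) ∧ (∑ i, |c i|) ≤ 1 ∧ g = ∑ i, c i • f i}

open Filter Topology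

noncomputable def clampR (y : ℝ) : ℝ := max (min y 1) (-1)

lemma clampR_abs_le_one (y : ℝ) : |clampR y| ≤ 1 := by
  rw [abs_le]
  exact ⟨le_max_right _ _, max_le (min_le_right _ _) (by norm_num)⟩

lemma clampR_abs_le (y : ℝ) : |clampR y| ≤ |y| := by
  unfold clampR
  rcases le_total y (-1) with h | h
  · rw [min_eq_left (h.trans (by norm_num)), max_eq_right h,
      abs_of_nonpos (by norm_num : (-1:ℝ) ≤ 0), abs_of_nonpos (h.trans (by norm_num))]
    linarith
  · rcases le_total y 1 with h2 | h2
    · rw [min_eq_left h2, max_eq_left h]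
    · rw [min_eq_right h2, max_eq_left (by norm_num),
        abs_of_nonneg (by norm_num : (0:ℝ) ≤ 1), abs_of_nonneg (by linarith)]
      linarith

lemma clampR_eq_self {y : ℝ} (h : |y| ≤ 1) : clampR y = y := by
  rw [abs_le] at h
  unfold clampR
  rw [min_eq_left h.2, max_eq_left h.1]

lemma clampR_eq_self_of_lt {y : ℝ} (h : |clampR y| < 1) : clampR y = y := by
  rcases le_total y (-1) with h1 | h1
  · exfalso
    unfold clampR at h
    rw [min_eq_left (h1.trans (by norm_num)), max_eq_right h1] at h
    simp at h
  · rcases le_total 1 y with h2 | h2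
    · exfalso
      unfold clampR at h
      rw [min_eq_right h2, max_eq_left (by norm_num)] at h
      simp at h
    · exact clampR_eq_self (abs_le.2 ⟨h1, h2⟩)

lemma clampR_continuous : Continuous clampR := by
  unfold clampR; fun_prop

lemma hull_bound {X : Type*} [TopologicalSpace X] {u : ℕ → C(X, ℝ)}
    {x x₀ : X} {δ : ℝ} (hδ : 0 ≤ δ)
    (hu : ∀ n, |(u n) x - (u n) x₀| ≤ δ)
    {h : C(X, ℝ)} (hh : h ∈ absConvexHullOf (Set.range u)) :
    |h x - h x₀| ≤ δ := by
  obtain ⟨n, c, f, hf, hc, rfl⟩ := hh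
  have key : (∑ i, c i • f i) x - (∑ i, c i • f i) x₀ = ∑ i, c i * ((f i) x - (f i) x₀) := by
    simp [mul_sub, Finset.sum_sub_distrib]
  rw [key]
  calc |∑ i, c i * ((f i) x - (f i) x₀)| ≤ ∑ i, |c i * ((f i) x - (f i) x₀)| :=
        Finset.abs_sum_le_sum_abs _ _
    _ ≤ ∑ i, |c i| * δ := by
        refine Finset.sum_le_sum fun i _ => ?_
        rw [abs_mul]
        obtain ⟨m, hm⟩ := hf i
        refine mul_le_mul_of_nonneg_left ?_ (abs_nonneg _)
        rw [← hm]; exact hu m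
    _ = (∑ i, |c i|) * δ := (Finset.sum_mul _ _ _).symm
    _ ≤ 1 * δ := mul_le_mul_of_nonneg_right hc hδ
    _ = δ := one_mul δ

lemma closure_hull_bound {X : Type*} [TopologicalSpace X] {u : ℕ → C(X, ℝ)}
    {x x₀ : X} {δ : ℝ} (hδ : 0 ≤ δ)
    (hu : ∀ n, |(u n) x - (u n) x₀| ≤ δ)
    {g : C(X, ℝ)} (hg : g ∈ closure (absConvexHullOf (Set.range u))) :
    |g x - g x₀| ≤ δ := by
  have hcl : IsClosed {h : C(X, ℝ) | |h x - h x₀| ≤ δ} :=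
    isClosed_le (((continuous_eval_const x).sub (continuous_eval_const x₀)).abs) continuous_const
  exact hcl.closure_subset_iff.2 (fun h hh => hull_bound hδ hu hh) hg

universe u

open Filter Topology in
theorem sequentiallyAscoli_iff_ellInfty_maps_continuous
    (X : Type*) [TopologicalSpace X] [T35Space X] :
    IsSequentiallyAscoli X ↔
      ∀ (Γ : Type u) (T : X → lp (fun _ : Γ => ℝ) ⊤),
        -- (a) `T` is k-continuous
        (∀ A : Set X, IsCompact A → ContinuousOn T A) →
        -- (b) every pairing with an element of `ℓ₁(Γ)` is continuous
        (∀ a : lp (fun _ : Γ => ℝ) 1, Continuous fun x => ∑' γ, a γ * T x γ) →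
        -- (c) almost k-sequentiality
        (∃ ε : ℝ, 0 < ε ∧ ∃ u : ℕ → C(X, ℝ),
          Filter.Tendsto u Filter.atTop (nhds (0 : C(X, ℝ))) ∧
          ∀ a : lp (fun _ : Γ => ℝ) 1, ‖a‖ ≤ ε →
            ∃ g ∈ closure (absConvexHullOf (Set.range u)), ∀ x : X, g x = ∑' γ, a γ * T x γ) →
        Continuous T := by
  constructor
  · intro hSA Γ T ha hb hc
    classical
    obtain ⟨ε, hε, u, hu, hc⟩ := hc
    have hequ := hSA u 0 hu
    have hg : ∀ γ : Γ, ∃ g : C(X, ℝ), g ∈ closure (absConvexHullOf (Set.range u)) ∧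
        ∀ x, g x = ε * T x γ := by
      intro γ
      have hnorm : ‖(lp.single 1 γ ε : lp (fun _ : Γ => ℝ) 1)‖ ≤ ε := by
        have h1 := lp.norm_single (E := fun _ : Γ => ℝ) (p := 1) (by simp) γ ε
        rw [h1, Real.norm_eq_abs, abs_of_pos hε]
      obtain ⟨g, hg1, hg2⟩ := hc _ hnorm
      refine ⟨g, hg1, fun x => ?_⟩
      rw [hg2 x, tsum_eq_single γ (fun γ' hne => ?_)]
      · rw [lp.single_apply_self]
      · rw [lp.single_apply_ne 1 γ _ hne, zero_mul]
    choose g hgmem hgval using hg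
    rw [continuous_iff_continuousAt]
    intro x₀
    rw [ContinuousAt, Metric.tendsto_nhds]
    intro ε' hε'
    have key := Metric.equicontinuousAt_iff_right.1 (hequ x₀) (ε * ε' / 2) (by positivity)
    filter_upwards [key] with x hx
    have hcoord : ∀ γ, |T x γ - T x₀ γ| ≤ ε' / 2 := by
      intro γ
      have h1 : |g γ x - g γ x₀| ≤ ε * ε' / 2 := by
        refine closure_hull_bound (by positivity) (fun n => ?_) (hgmem γ)
        have := hx n
        rw [Real.dist_eq, abs_sub_comm] at this
        exact this.le
      rw [hgval γ x, hgval γ x₀, ← mul_sub, abs_mul, abs_of_pos hε] at h1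
      nlinarith
    rw [dist_eq_norm]
    have hle : ‖T x - T x₀‖ ≤ ε' / 2 := by
      refine lp.norm_le_of_forall_le (by positivity) fun γ => ?_
      have heq : (T x - T x₀) γ = T x γ - T x₀ γ := by
        rw [lp.coeFn_sub]; rfl
      rw [heq, Real.norm_eq_abs]
      exact hcoord γ
    linarith
  · intro h u g hug
    classical
    set v : ℕ → C(X, ℝ) := fun n => u n - g with hv
    have hv0 : Tendsto v atTop (𝓝 0) := by
      have := hug.sub (tendsto_const_nhds (x := g))
      simpa using this
    set t : ℕ → C(X, ℝ) :=
      fun n => ⟨fun x => clampR (v n x), clampR_continuous.comp (v n).continuous⟩ with ht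
    have htapp : ∀ n (x : X), t n x = clampR (v n x) := fun n x => rfl
    have ht0 : Tendsto t atTop (𝓝 0) := by
      rw [ContinuousMap.tendsto_iff_forall_isCompact_tendstoUniformlyOn]
      intro K hK
      have hvK := ContinuousMap.tendsto_iff_forall_isCompact_tendstoUniformlyOn.1 hv0 K hK
      rw [Metric.tendstoUniformlyOn_iff] at hvK ⊢
      intro δ hδ
      filter_upwards [hvK δ hδ] with n hn x hx
      have h1 := hn x hx
      rw [ContinuousMap.zero_apply, Real.dist_eq, zero_sub, abs_neg] at h1 ⊢
      exact lt_of_le_of_lt (clampR_abs_le _) h1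
    have hmem : ∀ x : X, Memℓp (fun γ : ULift.{u} ℕ => t γ.down x) ⊤ := by
      intro x
      apply memℓp_infty
      refine ⟨1, ?_⟩
      rintro r ⟨γ, rfl⟩
      show ‖t γ.down x‖ ≤ 1
      rw [Real.norm_eq_abs, htapp]
      exact clampR_abs_le_one _
    set T : X → lp (fun _ : ULift.{u} ℕ => ℝ) ⊤ := fun x => ⟨fun γ => t γ.down x, hmem x⟩ with hT
    have hTapp : ∀ (x : X) (γ : ULift.{u} ℕ), T x γ = t γ.down x := fun x γ => rfl
    -- (a)
    have haT : ∀ A : Set X, IsCompact A → ContinuousOn T A := by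
      intro A hA x₀ hx₀
      rw [ContinuousWithinAt, Metric.tendsto_nhds]
      intro δ hδ
      have htA := ContinuousMap.tendsto_iff_forall_isCompact_tendstoUniformlyOn.1 ht0 A hA
      rw [Metric.tendstoUniformlyOn_iff] at htA
      obtain ⟨N, hN⟩ := eventually_atTop.1 (htA (δ/4) (by linarith))
      have hfin : ∀ᶠ x in 𝓝 x₀, ∀ n ∈ Finset.range N, dist (t n x) (t n x₀) < δ/2 := by
        rw [Filter.eventually_all_finset]
        intro n _
        exact Metric.tendsto_nhds.1 ((t n).continuous.tendsto x₀) (δ/2) (by linarith)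
      have hev : ∀ᶠ x in 𝓝[A] x₀,
          (∀ n ∈ Finset.range N, dist (t n x) (t n x₀) < δ/2) ∧ x ∈ A :=
        (hfin.filter_mono nhdsWithin_le_nhds).and eventually_mem_nhdsWithin
      filter_upwards [hev] with x hx
      obtain ⟨hx1, hx2⟩ := hx
      rw [dist_eq_norm]
      have hb : ∀ γ : ULift.{u} ℕ, ‖(T x - T x₀) γ‖ ≤ δ/2 := by
        intro γ
        have heq : (T x - T x₀) γ = t γ.down x - t γ.down x₀ := by rw [lp.coeFn_sub]; rfl
        rw [heq, Real.norm_eq_abs]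
        rcases lt_or_ge γ.down N with hn | hn
        · exact (le_of_lt (by simpa [Real.dist_eq] using hx1 γ.down (Finset.mem_range.2 hn)))
        · have h1 := hN γ.down hn x hx2
          have h2 := hN γ.down hn x₀ hx₀
          rw [ContinuousMap.zero_apply, Real.dist_eq, zero_sub, abs_neg] at h1 h2
          have := abs_sub (t γ.down x) (t γ.down x₀)
          linarith
      have := lp.norm_le_of_forall_le (by linarith : (0:ℝ) ≤ δ/2) hb
      linarith
    -- (b)
    have hbT : ∀ a : lp (fun _ : ULift.{u} ℕ => ℝ) 1, Continuous fun x => ∑' γ, a γ * T x γ := by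
      intro a
      have hsum : Summable fun γ : ULift.{u} ℕ => ‖a γ‖ := by
        have h1 := lp.hasSum_norm (E := fun _ : ULift.{u} ℕ => ℝ) (p := 1) (by simp) a
        simpa using h1.summable
      refine continuous_tsum (fun γ => ?_) hsum (fun γ x => ?_)
      · exact continuous_const.mul (t γ.down).continuous
      · rw [norm_mul]
        have h2 : ‖T x γ‖ ≤ 1 := by rw [hTapp, Real.norm_eq_abs, htapp]; exact clampR_abs_le_one _
        calc ‖a γ‖ * ‖T x γ‖ ≤ ‖a γ‖ * 1 := mul_le_mul_of_nonneg_left h2 (norm_nonneg _)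
          _ = ‖a γ‖ := mul_one _
    -- (c) and continuity of T
    have hT : Continuous T := by
      refine h (ULift.{u} ℕ) T haT hbT ⟨1, one_pos, t, ht0, ?_⟩
      intro a ha
      have hsum1 : HasSum (fun γ : ULift.{u} ℕ => ‖a γ‖) ‖a‖ := by
        have h1 := lp.hasSum_norm (E := fun _ : ULift.{u} ℕ => ℝ) (p := 1) (by simp) a
        simpa using h1
      have hGc : Continuous fun x => ∑' γ, a γ * T x γ := hbT a
      refine ⟨⟨_, hGc⟩, ?_, fun x => rfl⟩
      set S : ℕ → C(X, ℝ) := fun N => ∑ i ∈ Finset.range N, a (ULift.up i) • t i with hS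
      have hSmem : ∀ N, S N ∈ absConvexHullOf (Set.range t) := by
        intro N
        refine ⟨N, fun i => a (ULift.up (i : ℕ)), fun i => t (i : ℕ),
          fun i => ⟨(i : ℕ), rfl⟩, ?_, ?_⟩
        · rw [Fin.sum_univ_eq_sum_range (fun i => |a (ULift.up i)|) N]
          refine le_trans ?_ ha
          rw [← hsum1.tsum_eq]
          have himg : ∑ i ∈ Finset.range N, |a (ULift.up i)| =
              ∑ γ ∈ (Finset.range N).image ULift.up, ‖a γ‖ := by
            rw [Finset.sum_image (fun x _ y _ hxy => ULift.up_injective hxy)]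
            simp [Real.norm_eq_abs]
          rw [himg]
          exact Summable.sum_le_tsum _ (fun γ _ => norm_nonneg _) hsum1.summable
        · exact (Fin.sum_univ_eq_sum_range (fun i => a (ULift.up i) • t i) N).symm
      have hb2 : ∀ (n : ℕ) (x : X), ‖a (ULift.up n) * t n x‖ ≤ ‖a (ULift.up n)‖ := by
        intro n x
        rw [norm_mul]
        calc ‖a (ULift.up n)‖ * ‖t n x‖ ≤ ‖a (ULift.up n)‖ * 1 := by
              refine mul_le_mul_of_nonneg_left ?_ (norm_nonneg _)
              rw [Real.norm_eq_abs, htapp]; exact clampR_abs_le_one _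
          _ = _ := mul_one _
      have hsum2 : Summable fun n : ℕ => ‖a (ULift.up n)‖ :=
        hsum1.summable.comp_injective ULift.up_injective
      have htendU := tendstoUniformly_tsum_nat hsum2 hb2
      have hteq : (fun x : X => ∑' (n : ℕ), a (ULift.up n) * t n x)
          = fun x => ∑' γ : ULift.{u} ℕ, a γ * T x γ := by
        funext x
        exact Equiv.tsum_eq (⟨ULift.up, ULift.down, fun _ => rfl, fun _ => rfl⟩ :
          ℕ ≃ ULift.{u} ℕ) (fun γ => a γ * T x γ)
      have htend : Tendsto S atTop (𝓝 (⟨_, hGc⟩ : C(X, ℝ))) := by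
        rw [ContinuousMap.tendsto_iff_forall_isCompact_tendstoUniformlyOn]
        intro K hK
        have hcoe : (fun (N : ℕ) (x : X) => (S N) x) =
            fun N x => ∑ n ∈ Finset.range N, a (ULift.up n) * t n x := by
          funext N x
          simp [hS]
        rw [hcoe]
        have h3 : TendstoUniformlyOn (fun N x => ∑ n ∈ Finset.range N, a (ULift.up n) * t n x)
            (fun x => ∑' (n : ℕ), a (ULift.up n) * t n x) atTop K :=
          htendU.tendstoUniformlyOn
        rw [hteq] at h3
        exact h3
      exact mem_closure_of_tendsto htend (Eventually.of_forall hSmem)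
    -- conclude equicontinuity
    intro x₀
    rw [Metric.equicontinuousAt_iff_right]
    intro ε' hε'
    set δ : ℝ := min (ε'/4) (1/2) with hδ
    have hδ1 : δ ≤ ε'/4 := min_le_left _ _
    have hδ2 : δ ≤ 1/2 := min_le_right _ _
    have hδpos : 0 < δ := lt_min (by linarith) one_half_pos
    have hvpt : Tendsto (fun n => v n x₀) atTop (𝓝 0) := by
      have h1 := ((continuous_eval_const x₀).tendsto (0 : C(X, ℝ))).comp hv0
      simpa [Function.comp_def] using h1
    have hNev : ∀ᶠ n in atTop, |v n x₀| < δ/2 := by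
      have h1 := Metric.tendsto_nhds.1 hvpt (δ/2) (by linarith)
      simpa [Real.dist_eq] using h1
    obtain ⟨N, hN⟩ := eventually_atTop.1 hNev
    have hTev : ∀ᶠ x in 𝓝 x₀, dist (T x) (T x₀) < δ/2 :=
      Metric.tendsto_nhds.1 (hT.tendsto x₀) (δ/2) (by linarith)
    have hgev : ∀ᶠ x in 𝓝 x₀, |g x₀ - g x| < ε'/4 := by
      have h1 := Metric.tendsto_nhds.1 (g.continuous.tendsto x₀) (ε'/4) (by linarith)
      filter_upwards [h1] with x hx
      rw [Real.dist_eq, abs_sub_comm] at hx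
      exact hx
    have hfin : ∀ᶠ x in 𝓝 x₀, ∀ n ∈ Finset.range N, dist (u n x₀) (u n x) < ε' := by
      rw [Filter.eventually_all_finset]
      intro n _
      have h1 := Metric.tendsto_nhds.1 ((u n).continuous.tendsto x₀) ε' hε'
      filter_upwards [h1] with x hx
      rw [dist_comm] at hx
      exact hx
    filter_upwards [hTev, hgev, hfin] with x h1 h2 h3
    intro n
    rcases lt_or_ge n N with hn | hn
    · exact h3 n (Finset.mem_range.2 hn)
    · have hvx₀ : |v n x₀| < δ/2 := hN n hn
      have htx₀ : t n x₀ = v n x₀ := by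
        rw [htapp]
        exact clampR_eq_self (by linarith [abs_nonneg (v n x₀)])
      have hcoord : |t n x - t n x₀| < δ/2 := by
        have h4 := lp.norm_apply_le_norm ENNReal.top_ne_zero (T x - T x₀) (ULift.up n)
        rw [dist_eq_norm] at h1
        have heq : (T x - T x₀) (ULift.up n) = t n x - t n x₀ := by rw [lp.coeFn_sub]; rfl
        rw [heq, Real.norm_eq_abs] at h4
        linarith
      have htx : t n x = v n x := by
        rw [htapp]
        apply clampR_eq_self_of_lt
        have h5 : |t n x| < 1 := by
          have h6 := abs_sub_abs_le_abs_sub (t n x) (t n x₀)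
          linarith [abs_nonneg (v n x₀), hvx₀, hcoord, htx₀ ▸ hvx₀]
        rw [htapp] at h5
        exact h5
      have hv' : |v n x₀ - v n x| < δ/2 := by
        rw [← htx₀, ← htx, abs_sub_comm]
        exact hcoord
      have he1 : v n x₀ = u n x₀ - g x₀ := by simp [hv]
      have he2 : v n x = u n x - g x := by simp [hv]
      rw [he1, he2] at hv'
      rw [Real.dist_eq]
      have hsplit : u n x₀ - u n x = (u n x₀ - g x₀ - (u n x - g x)) + (g x₀ - g x) := by ring
      rw [hsplit]
      calc |(u n x₀ - g x₀ - (u n x - g x)) + (g x₀ - g x)|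
          ≤ |u n x₀ - g x₀ - (u n x - g x)| + |g x₀ - g x| := abs_add_le _ _
        _ < ε' := by linarith
end

section
/- Let X be a Tychonoff (completely regular Hausdorff) space, M > 0, and let K be a compact subset of C_k(X) such that |f(x)| ≤ M for every f ∈ K and every x ∈ X. Define T : X → ℓ∞(K) by T(x) = (f(x))_{f∈K}. Then T is well defined (T(x) is a bounded function on K for each x) and T is k-continuous, i.e. the restriction of T to every compact subset A of X is continuous into ℓ∞(K) with the sup norm. -/
open scoped Uniformity Topology

theorem evaluation_into_ellInfty_k_continuous
    (X : Type*) [TopologicalSpace X] [T35Space X]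
    (M : ℝ) (hM : 0 < M)
    (K : Set C(X, ℝ)) (hK : IsCompact K)
    (hbd : ∀ f ∈ K, ∀ x : X, |f x| ≤ M) :
    -- `T` is well defined: `(f (x))_{f ∈ K}` is a bounded function on `K`
    (∀ x : X, Memℓp (fun f : K => f.1 x) ⊤) ∧
      -- and `T` is k-continuous into `ℓ∞(K)` with the sup norm
      ∀ T : X → lp (fun _ : K => ℝ) ⊤,
        (∀ (x : X) (f : K), T x f = f.1 x) →
        ∀ A : Set X, IsCompact A → ContinuousOn T A := by
  constructor
  · intro x
    apply memℓp_infty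
    refine ⟨M, ?_⟩
    rintro r ⟨f, rfl⟩
    simpa [Real.norm_eq_abs] using hbd f.1 f.2 x
  · intro T hT A hA
    intro x₀ hx₀
    rw [ContinuousWithinAt, Metric.tendsto_nhds]
    intro ε hε
    set δ := ε / 4 with hδdef
    have hδ : 0 < δ := by positivity
    -- the entourage of uniform convergence on `A` within `δ`
    set E : Set (C(X, ℝ) × C(X, ℝ)) :=
      { fg | ∀ y ∈ A, dist (fg.1 y) (fg.2 y) < δ } with hEdef
    have hE : E ∈ 𝓤 C(X, ℝ) := by
      rw [ContinuousMap.mem_compactConvergence_entourage_iff]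
      exact ⟨A, { p : ℝ × ℝ | dist p.1 p.2 < δ }, hA, Metric.dist_mem_uniformity hδ,
        fun fg hfg => hfg⟩
    -- cover K by finitely many balls
    obtain ⟨t, hts, hcov⟩ := hK.elim_nhds_subcover (fun f => UniformSpace.ball f E)
      (fun f _ => UniformSpace.ball_mem_nhds f hE)
    -- a neighborhood of x₀ where each function in t moves by less than δ
    have hV : ∀ᶠ x in 𝓝[A] x₀, ∀ f ∈ t, dist (f x) (f x₀) < δ := by
      apply eventually_nhdsWithin_of_eventually_nhds
      rw [Filter.eventually_all_finset]
      intro f _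
      have : ContinuousAt (fun x => dist (f x) (f x₀)) x₀ :=
        (continuous_dist.comp (f.continuous.prodMk continuous_const)).continuousAt
      have := this.eventually_lt continuousAt_const (by simpa using hδ)
      simpa using this
    filter_upwards [hV, self_mem_nhdsWithin] with x hx hxA
    -- bound each coordinate of T x - T x₀
    have key : ∀ g : K, ‖(T x - T x₀) g‖ ≤ 3 * δ := by
      intro g
      have hg : (g : C(X, ℝ)) ∈ ⋃ f ∈ t, UniformSpace.ball f E := hcov g.2
      simp only [Set.mem_iUnion] at hg
      obtain ⟨f, hft, hgf⟩ := hg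
      have hgf' : ∀ y ∈ A, dist (f y) (g.1 y) < δ := hgf
      have h1 : dist (g.1 x) (f x) < δ := by
        rw [dist_comm]; exact hgf' x hxA
      have h2 : dist (f x) (f x₀) < δ := hx f hft
      have h3 : dist (f x₀) (g.1 x₀) < δ := hgf' x₀ hx₀
      have hdist : dist (g.1 x) (g.1 x₀) < 3 * δ := by
        calc dist (g.1 x) (g.1 x₀)
            ≤ dist (g.1 x) (f x) + dist (f x) (f x₀) + dist (f x₀) (g.1 x₀) :=
              dist_triangle4 _ _ _ _
          _ < δ + δ + δ := by linarith
          _ = 3 * δ := by ring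
      have : (T x - T x₀) g = g.1 x - g.1 x₀ := by
        rw [lp.coeFn_sub, Pi.sub_apply, hT, hT]
      rw [this, Real.norm_eq_abs, ← Real.dist_eq]
      exact hdist.le
    have hnorm : ‖T x - T x₀‖ ≤ 3 * δ :=
      lp.norm_le_of_forall_le (by positivity) key
    rw [dist_eq_norm]
    calc ‖T x - T x₀‖ ≤ 3 * δ := hnorm
      _ < ε := by rw [hδdef]; linarith
end

section
/- Let X be a Tychonoff (completely regular Hausdorff) space and let K be a compact subset of C_k(X). Then K is evenly continuous (i.e. the evaluation map X × K → ℝ, (x, f) ↦ f(x), is continuous, where K carries the topology induced from C_k(X)) if and only if K is equicontinuous. -/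
open Topology Filter

theorem compact_evenlyContinuous_iff_equicontinuous
    (X : Type*) [TopologicalSpace X] [T35Space X]
    (K : Set C(X, ℝ)) (hK : IsCompact K) :
    -- `K` is evenly continuous, i.e. the evaluation map `X × K → ℝ` is continuous,
    (Continuous fun p : X × K => p.2.1 p.1) ↔
      -- if and only if `K` is equicontinuous
      Equicontinuous fun f : K => ⇑f.1 := by
  haveI : CompactSpace K := isCompact_iff_compactSpace.mp hK
  constructor
  · intro h x₀
    rw [Metric.equicontinuousAt_iff_right]
    intro ε hε
    -- for each f : K, get U f ∈ 𝓝 x₀ and V f ∈ 𝓝 f with dist (g x) (f x₀) < ε/2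
    have key : ∀ f : K, ∃ U ∈ 𝓝 x₀, ∃ V ∈ 𝓝 f,
        ∀ x ∈ U, ∀ g ∈ V, dist ((g : C(X, ℝ)) x) ((f : C(X, ℝ)) x₀) < ε / 2 := by
      intro f
      have hc : ContinuousAt (fun p : X × K => p.2.1 p.1) (x₀, f) := h.continuousAt
      have hev : ∀ᶠ p : X × K in 𝓝 (x₀, f),
          dist (p.2.1 p.1) ((f : C(X, ℝ)) x₀) < ε / 2 :=
        hc (Metric.ball_mem_nhds _ (by linarith))
      rw [nhds_prod_eq, Filter.eventually_prod_iff] at hev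
      obtain ⟨p, hp, q, hq, hpq⟩ := hev
      exact ⟨_, hp, _, hq, fun x hx g hg => hpq hx hg⟩
    choose U hU V hV hUV using key
    obtain ⟨t, ht⟩ := isCompact_univ.elim_nhds_subcover V (fun f _ => hV f)
    have hU₀ : (⋂ f ∈ t, U f) ∈ 𝓝 x₀ := (Filter.biInter_finset_mem t).mpr fun f _ => hU f
    filter_upwards [hU₀] with x hx g
    obtain ⟨f, hf, hgf⟩ : ∃ f ∈ t, g ∈ V f := by
      have := ht.2 (Set.mem_univ g)
      simpa using this
    have hxU : x ∈ U f := Set.mem_iInter₂.mp hx f hf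
    have hx₀U : x₀ ∈ U f := mem_of_mem_nhds (hU f)
    rw [dist_comm]
    calc dist ((g : C(X, ℝ)) x) ((g : C(X, ℝ)) x₀)
        ≤ dist ((g : C(X, ℝ)) x) ((f : C(X, ℝ)) x₀)
          + dist ((f : C(X, ℝ)) x₀) ((g : C(X, ℝ)) x₀) := dist_triangle _ _ _
      _ < ε / 2 + ε / 2 := by
          have h1 := hUV f x hxU g hgf
          have h2 := hUV f x₀ hx₀U g hgf
          rw [dist_comm] at h2
          linarith
      _ = ε := by ring
  · intro heq
    rw [continuous_iff_continuousAt]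
    rintro ⟨x₀, f₀⟩
    rw [ContinuousAt, Metric.tendsto_nhds]
    intro ε hε
    have h1 : ∀ᶠ x in 𝓝 x₀, ∀ g : K, dist ((g : C(X, ℝ)) x₀) ((g : C(X, ℝ)) x) < ε / 2 :=
      Metric.equicontinuousAt_iff_right.mp (heq x₀) (ε / 2) (by linarith)
    have h2 : ∀ᶠ g : K in 𝓝 f₀, dist ((g : C(X, ℝ)) x₀) ((f₀ : C(X, ℝ)) x₀) < ε / 2 := by
      have hc : Continuous fun g : K => (g : C(X, ℝ)) x₀ :=
        (continuous_eval_const x₀).comp continuous_subtype_val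
      exact hc.continuousAt (Metric.ball_mem_nhds _ (by linarith))
    rw [nhds_prod_eq]
    filter_upwards [h1.prod_mk h2] with p ⟨hp1, hp2⟩
    calc dist (p.2.1 p.1) ((f₀ : C(X, ℝ)) x₀)
        ≤ dist (p.2.1 p.1) (p.2.1 x₀) + dist (p.2.1 x₀) ((f₀ : C(X, ℝ)) x₀) :=
          dist_triangle _ _ _
      _ < ε / 2 + ε / 2 := by
          have := hp1 p.2
          rw [dist_comm] at this
          exact add_lt_add this hp2
      _ = ε := by ring
end

section
/- A Tychonoff (completely regular Hausdorff) space X is sequentially Ascoli if and only if every k-continuous bounded map T : X → c₀ that is weakly continuous is continuous, where c₀ is the Banach space of real sequences converging to 0 with the supremum norm. -/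
open ZeroAtInfty

namespace SeqAscoliAux
noncomputable section
open Filter Topology ZeroAtInftyContinuousMap

def c0mk (f : ℕ → ℝ) (h : Filter.Tendsto f Filter.atTop (nhds 0)) : C₀(ℕ, ℝ) :=
  ⟨⟨f, continuous_of_discreteTopology⟩, by rwa [cocompact_eq_atTop (α := ℕ)]⟩
@[simp] lemma c0mk_apply (f : ℕ → ℝ) (h) (n : ℕ) : c0mk f h n = f n := rfl
lemma coord_tendsto (f : C₀(ℕ, ℝ)) :
    Filter.Tendsto (fun n => f n) Filter.atTop (nhds 0) := by
  have := zero_at_infty f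
  rwa [cocompact_eq_atTop (α := ℕ)] at this
lemma norm_le_of (f : C₀(ℕ, ℝ)) {C : ℝ} (hC : 0 ≤ C) (h : ∀ n, |f n| ≤ C) : ‖f‖ ≤ C := by
  rw [← ZeroAtInftyContinuousMap.norm_toBCF_eq_norm]
  exact (BoundedContinuousFunction.norm_le hC).2 (fun n => by simpa using h n)
lemma abs_coord_le (f : C₀(ℕ, ℝ)) (n : ℕ) : |f n| ≤ ‖f‖ := by
  rw [← ZeroAtInftyContinuousMap.norm_toBCF_eq_norm]
  simpa using f.toBCF.norm_coe_le_norm n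
def coordCLM (n : ℕ) : C₀(ℕ, ℝ) →L[ℝ] ℝ :=
  LinearMap.mkContinuous
    { toFun := fun f => f n, map_add' := fun f g => rfl, map_smul' := fun c f => rfl }
    1 (fun f => by simpa using abs_coord_le f n)
@[simp] lemma coordCLM_apply (n : ℕ) (f : C₀(ℕ, ℝ)) : coordCLM n f = f n := rfl

theorem forward (X : Type*) [TopologicalSpace X] (hA : _root_.IsSequentiallyAscoli X)
    (T : X → C₀(ℕ, ℝ))
    (hk : ∀ A : Set X, IsCompact A → ContinuousOn T A)
    (hw : Continuous fun x => toWeakSpace ℝ C₀(ℕ, ℝ) (T x)) :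
    Continuous T := by
  have hcoord : ∀ n : ℕ, Continuous fun x => T x n := by
    intro n
    exact (WeakBilin.eval_continuous ((topDualPairing ℝ C₀(ℕ, ℝ)).flip) (coordCLM n)).comp hw
  set u : ℕ → C(X, ℝ) := fun n => ⟨fun x => T x n, hcoord n⟩ with hu
  have hu0 : Tendsto u atTop (nhds (0 : C(X, ℝ))) := by
    rw [ContinuousMap.tendsto_iff_forall_isCompact_tendstoUniformlyOn]
    intro K hK
    rw [Metric.tendstoUniformlyOn_iff]
    intro ε hε
    have himg : IsCompact (T '' K) := hK.image_of_continuousOn (hk K hK)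
    obtain ⟨t, htfin, hcov⟩ :=
      Metric.totallyBounded_iff.mp himg.totallyBounded (ε / 2) (by linarith)
    have htail : ∀ᶠ n in atTop, ∀ c ∈ t, |(c : C₀(ℕ, ℝ)) n| < ε / 2 := by
      rw [eventually_all_finite htfin]
      intro c _
      have := (coord_tendsto c).abs
      rw [abs_zero] at this
      exact this.eventually_lt_const (by linarith)
    filter_upwards [htail] with n hn x hx
    obtain ⟨c, hc, hball⟩ := Set.mem_iUnion₂.mp (hcov ⟨x, hx, rfl⟩)
    have h1 : |T x n - c n| ≤ dist (T x) c := by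
      have : (T x - c) n = T x n - c n := rfl
      calc |T x n - c n| = |(T x - c) n| := by rw [this]
        _ ≤ ‖T x - c‖ := abs_coord_le _ _
        _ = dist (T x) c := (dist_eq_norm _ _).symm
    have h2 : dist (T x) c < ε / 2 := Metric.mem_ball.mp hball
    have h3 : |c n| < ε / 2 := hn c hc
    have : dist ((0 : C(X, ℝ)) x) (u n x) = |T x n| := by
      simp [hu, Real.dist_eq, abs_sub_comm]
    rw [this]
    calc |T x n| ≤ |T x n - c n| + |c n| := by
          have := abs_add_le (T x n - c n) (c n); simpa using this
      _ < ε := by linarith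
  have heq := hA u 0 hu0
  rw [continuous_iff_continuousAt]
  intro x₀
  rw [Metric.continuousAt_iff']
  intro ε hε
  have := (Metric.equicontinuousAt_iff_right.mp (heq x₀)) (ε / 2) (by linarith)
  filter_upwards [this] with x hx
  have : ∀ n, |(T x - T x₀) n| ≤ ε / 2 := by
    intro n
    have : (T x - T x₀) n = T x n - T x₀ n := rfl
    rw [this]
    have := hx n
    simp only [hu, Real.dist_eq, ContinuousMap.coe_mk] at this
    rw [abs_sub_comm]
    exact le_of_lt this
  calc dist (T x) (T x₀) = ‖T x - T x₀‖ := dist_eq_norm _ _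
    _ ≤ ε / 2 := norm_le_of _ (by linarith) this
    _ < ε := by linarith

open ZeroAtInfty Filter Topology ZeroAtInftyContinuousMap

/-- The standard "basis" elements of `c₀`. -/
def basis (n : ℕ) : C₀(ℕ, ℝ) :=
  c0mk (fun m => if m = n then (1 : ℝ) else 0)
    (by
      apply tendsto_const_nhds.congr'
      filter_upwards [eventually_gt_atTop n] with m hm
      simp [hm.ne'])

@[simp] lemma basis_apply (n m : ℕ) : basis n m = if m = n then (1 : ℝ) else 0 := rfl

lemma coord_finsum (c : ℕ → ℝ) (F : Finset ℕ) (m : ℕ) :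
    (∑ n ∈ F, c n • basis n) m = if m ∈ F then c m else 0 := by
  have h1 : (∑ n ∈ F, c n • basis n) m = coordCLM m (∑ n ∈ F, c n • basis n) := rfl
  rw [h1, map_sum]
  simp only [map_smul, coordCLM_apply, basis_apply, smul_eq_mul, mul_ite, mul_one, mul_zero]
  exact Finset.sum_ite_eq F m c

lemma dual_summable (φ : C₀(ℕ, ℝ) →L[ℝ] ℝ) : Summable fun n => |φ (basis n)| := by
  apply summable_of_sum_le (c := ‖φ‖) (fun n => abs_nonneg _)
  intro F
  set c : ℕ → ℝ := fun n => if φ (basis n) < 0 then (-1 : ℝ) else 1 with hc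
  set s : C₀(ℕ, ℝ) := ∑ n ∈ F, c n • basis n with hs
  have hnorm : ‖s‖ ≤ 1 := by
    apply norm_le_of _ zero_le_one
    intro m
    rw [hs, coord_finsum]
    split_ifs <;> simp [hc] <;> split_ifs <;> norm_num
  have hφs : φ s = ∑ n ∈ F, |φ (basis n)| := by
    rw [hs, map_sum]
    apply Finset.sum_congr rfl
    intro n _
    rw [map_smul, smul_eq_mul, hc]
    by_cases hneg : φ (basis n) < 0
    · simp [hneg, abs_of_neg hneg]
    · simp [hneg, abs_of_nonneg (not_lt.mp hneg)]
  calc ∑ n ∈ F, |φ (basis n)| = φ s := hφs.symm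
    _ ≤ |φ s| := le_abs_self _
    _ ≤ ‖φ‖ * ‖s‖ := φ.le_opNorm s
    _ ≤ ‖φ‖ * 1 := by
        have := φ.opNorm_nonneg
        nlinarith
    _ = ‖φ‖ := mul_one _

lemma dual_rep (φ : C₀(ℕ, ℝ) →L[ℝ] ℝ) (y : C₀(ℕ, ℝ)) :
    φ y = ∑' n, φ (basis n) * y n := by
  set a : ℕ → ℝ := fun n => φ (basis n) with ha
  have hsum : Summable fun n => a n * y n := by
    apply Summable.of_abs
    apply Summable.of_nonneg_of_le (fun n => abs_nonneg _) (fun n => ?_)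
      ((dual_summable φ).mul_right ‖y‖)
    rw [abs_mul]
    exact mul_le_mul_of_nonneg_left (abs_coord_le y n) (abs_nonneg _)
  have h1 : Tendsto (fun N => ∑ n ∈ Finset.range N, a n * y n) atTop
      (nhds (∑' n, a n * y n)) := hsum.hasSum.tendsto_sum_nat
  set P : ℕ → C₀(ℕ, ℝ) := fun N => ∑ n ∈ Finset.range N, y n • basis n with hP
  have hPy : Tendsto P atTop (nhds y) := by
    rw [Metric.tendsto_atTop]
    intro ε hε
    have := (coord_tendsto y).abs
    rw [abs_zero] at this
    obtain ⟨N, hN⟩ := eventually_atTop.mp (this.eventually_lt_const (show (0:ℝ) < ε/2 by linarith))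
    refine ⟨N, fun M hM => ?_⟩
    have key : ∀ m, |(P M - y) m| ≤ ε / 2 := by
      intro m
      have hco : (P M - y) m = P M m - y m := rfl
      rw [hco, hP]
      rw [coord_finsum]
      by_cases hm : m ∈ Finset.range M
      · simp [hm]; linarith
      · simp only [hm, if_false, zero_sub, abs_neg]
        have : N ≤ m := le_trans hM (le_of_not_gt (fun hlt => hm (Finset.mem_range.mpr hlt)))
        exact le_of_lt (hN m this)
    calc dist (P M) y = ‖P M - y‖ := dist_eq_norm _ _
      _ ≤ ε / 2 := norm_le_of _ (by linarith) key
      _ < ε := by linarith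
  have h2 : Tendsto (fun N => φ (P N)) atTop (nhds (φ y)) :=
    (φ.continuous.tendsto y).comp hPy
  have h3 : ∀ N, φ (P N) = ∑ n ∈ Finset.range N, a n * y n := by
    intro N
    rw [hP, map_sum]
    apply Finset.sum_congr rfl
    intro n _
    rw [map_smul, smul_eq_mul, mul_comm, ha]
  rw [funext h3] at h2
  exact tendsto_nhds_unique h2 h1


def cl (t : ℝ) : ℝ := max (-1) (min 1 t)

lemma cl_abs_le_one (t : ℝ) : |cl t| ≤ 1 := by
  rw [abs_le]
  exact ⟨le_max_left _ _, max_le (by norm_num) (min_le_left _ _)⟩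

lemma cl_abs_le (t : ℝ) : |cl t| ≤ |t| := by
  rw [abs_le]
  constructor
  · exact le_max_of_le_right (le_min (by linarith [abs_nonneg t]) (neg_abs_le t))
  · exact max_le (by linarith [abs_nonneg t]) ((min_le_right 1 t).trans (le_abs_self t))

lemma cl_eq_self (t : ℝ) (h : |cl t| < 1) : cl t = t := by
  unfold cl at *
  rcases le_total t 1 with h1 | h1 <;> rcases le_total (-1 : ℝ) t with h2 | h2 <;>
    simp [min_eq_right, min_eq_left, max_eq_right, max_eq_left, h1, h2, abs_lt] at * <;>
    linarith

lemma cl_continuous : Continuous cl :=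
  continuous_const.max (continuous_const.min continuous_id)

@[simp] lemma cl_zero : cl 0 = 0 := by norm_num [cl]

theorem backward (X : Type*) [TopologicalSpace X]
    (h : ∀ T : X → C₀(ℕ, ℝ),
        (∀ A : Set X, IsCompact A → ContinuousOn T A) →
        (∃ C : ℝ, ∀ x : X, ‖T x‖ ≤ C) →
        (Continuous fun x => toWeakSpace ℝ C₀(ℕ, ℝ) (T x)) →
        Continuous T) :
    _root_.IsSequentiallyAscoli X := by
  intro u g htend
  have hpt : ∀ x : X, Tendsto (fun n => u n x - g x) atTop (nhds 0) := by
    intro x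
    have h1 : Tendsto (fun n => u n x) atTop (nhds (g x)) :=
      ((continuous_eval_const x).tendsto g).comp htend
    simpa using h1.sub_const (g x)
  have hcl : ∀ x : X, Tendsto (fun n => cl (u n x - g x)) atTop (nhds 0) := by
    intro x
    have := (cl_continuous.tendsto 0).comp (hpt x)
    simpa [Function.comp_def] using this
  set T : X → C₀(ℕ, ℝ) := fun x => c0mk (fun n => cl (u n x - g x)) (hcl x) with hT
  have hTapp : ∀ x n, T x n = cl (u n x - g x) := fun x n => rfl
  have hUnif : ∀ A : Set X, IsCompact A → ∀ ε > 0,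
      ∀ᶠ n in atTop, ∀ x ∈ A, |u n x - g x| < ε := by
    intro A hA ε hε
    have h1 := ContinuousMap.tendsto_iff_forall_isCompact_tendstoUniformlyOn.mp htend A hA
    have h2 := Metric.tendstoUniformlyOn_iff.mp h1 ε hε
    filter_upwards [h2] with n hn x hx
    have := hn x hx
    rwa [Real.dist_eq, abs_sub_comm] at this
  -- k-continuity
  have hkcont : ∀ A : Set X, IsCompact A → ContinuousOn T A := by
    intro A hA a ha
    rw [ContinuousWithinAt, Metric.tendsto_nhds]
    intro ε hε
    obtain ⟨N, hN⟩ := eventually_atTop.mp (hUnif A hA (ε / 4) (by linarith))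
    have hfin : ∀ᶠ x in nhdsWithin a A,
        ∀ n ∈ Finset.range N, |cl (u n x - g x) - cl (u n a - g a)| < ε / 2 := by
      rw [eventually_all_finset]
      intro n _
      have hc : Continuous fun x => cl (u n x - g x) :=
        cl_continuous.comp ((u n).continuous.sub g.continuous)
      have h3 := Metric.tendsto_nhds.mp (hc.continuousWithinAt (s := A) (x := a))
        (ε / 2) (by linarith)
      filter_upwards [h3] with x hx
      rwa [Real.dist_eq] at hx
    filter_upwards [hfin, self_mem_nhdsWithin] with x hx hxA
    have key : ∀ n, |(T x - T a) n| ≤ ε / 2 := by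
      intro n
      have hco : (T x - T a) n = cl (u n x - g x) - cl (u n a - g a) := rfl
      rw [hco]
      by_cases hn : n < N
      · exact le_of_lt (hx n (Finset.mem_range.mpr hn))
      · push_neg at hn
        have h1 : |cl (u n x - g x)| ≤ |u n x - g x| := cl_abs_le _
        have h2 := hN n hn x hxA
        have h3 := hN n hn a ha
        have h4 : |cl (u n a - g a)| ≤ |u n a - g a| := cl_abs_le _
        calc |cl (u n x - g x) - cl (u n a - g a)|
            ≤ |cl (u n x - g x)| + |cl (u n a - g a)| := abs_sub _ _
          _ ≤ ε / 2 := by linarith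
    calc dist (T x) (T a) = ‖T x - T a‖ := dist_eq_norm _ _
      _ ≤ ε / 2 := norm_le_of _ (by linarith) key
      _ < ε := by linarith
  -- boundedness
  have hbdd : ∃ C : ℝ, ∀ x : X, ‖T x‖ ≤ C :=
    ⟨1, fun x => norm_le_of _ zero_le_one (fun n => cl_abs_le_one _)⟩
  -- weak continuity
  have hweak : Continuous fun x => toWeakSpace ℝ C₀(ℕ, ℝ) (T x) := by
    apply WeakBilin.continuous_of_continuous_eval
    intro φ
    have heq : (fun x => (topDualPairing ℝ C₀(ℕ, ℝ)).flip (toWeakSpace ℝ C₀(ℕ, ℝ) (T x)) φ)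
        = fun x => ∑' n, φ (basis n) * cl (u n x - g x) := by
      funext x
      exact dual_rep φ (T x)
    rw [heq]
    refine continuous_tsum (fun n => ?_) (dual_summable φ) (fun n x => ?_)
    · exact continuous_const.mul (cl_continuous.comp ((u n).continuous.sub g.continuous))
    · rw [Real.norm_eq_abs, abs_mul]
      exact mul_le_of_le_one_right (abs_nonneg _) (cl_abs_le_one _)
  have hTc : Continuous T := h T hkcont hbdd hweak
  -- equicontinuity
  intro x₀
  rw [Metric.equicontinuousAt_iff_right]
  intro ε hε
  set δ : ℝ := min ε 1 / 6 with hδ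
  have hδ0 : 0 < δ := by
    have : (0:ℝ) < min ε 1 := lt_min hε one_pos
    positivity
  have hδε : δ ≤ ε / 6 := by
    have : min ε 1 ≤ ε := min_le_left _ _
    rw [hδ]; linarith
  have hδ1 : δ ≤ 1 / 6 := by
    have : min ε 1 ≤ 1 := min_le_right _ _
    rw [hδ]; linarith
  have hptev : ∀ᶠ n in atTop, |u n x₀ - g x₀| < δ := by
    have := (hpt x₀).abs
    rw [abs_zero] at this
    exact this.eventually_lt_const hδ0
  obtain ⟨N, hN⟩ := eventually_atTop.mp hptev
  have hTev : ∀ᶠ x in nhds x₀, dist (T x) (T x₀) < δ :=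
    Metric.tendsto_nhds.mp (hTc.tendsto x₀) δ hδ0
  have hgev : ∀ᶠ x in nhds x₀, |g x - g x₀| < δ := by
    have h3 := Metric.tendsto_nhds.mp (g.continuous.tendsto x₀) δ hδ0
    filter_upwards [h3] with x hx
    rwa [Real.dist_eq] at hx
  have hfinev : ∀ᶠ x in nhds x₀, ∀ n ∈ Finset.range N, |u n x - u n x₀| < δ := by
    rw [eventually_all_finset]
    intro n _
    have h3 := Metric.tendsto_nhds.mp ((u n).continuous.tendsto x₀) δ hδ0
    filter_upwards [h3] with x hx
    rwa [Real.dist_eq] at hx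
  filter_upwards [hTev, hgev, hfinev] with x hT' hg' hfin' n
  rw [Real.dist_eq]
  by_cases hn : n < N
  · have := hfin' n (Finset.mem_range.mpr hn)
    rw [abs_sub_comm] at this
    linarith
  · push_neg at hn
    have hx₀ : |u n x₀ - g x₀| < δ := hN n hn
    have hcl₀ : cl (u n x₀ - g x₀) = u n x₀ - g x₀ :=
      cl_eq_self _ (lt_of_le_of_lt (cl_abs_le _) (by linarith))
    have hcoord : |cl (u n x - g x) - cl (u n x₀ - g x₀)| < δ := by
      have hco : (T x - T x₀) n = cl (u n x - g x) - cl (u n x₀ - g x₀) := rfl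
      calc |cl (u n x - g x) - cl (u n x₀ - g x₀)| = |(T x - T x₀) n| := by rw [hco]
        _ ≤ ‖T x - T x₀‖ := abs_coord_le _ _
        _ = dist (T x) (T x₀) := (dist_eq_norm _ _).symm
        _ < δ := hT'
    rw [hcl₀] at hcoord
    have habs : |cl (u n x - g x)| < 2 * δ := by
      have h1 := abs_sub_abs_le_abs_sub (cl (u n x - g x)) (u n x₀ - g x₀)
      linarith
    have hclx : cl (u n x - g x) = u n x - g x :=
      cl_eq_self _ (lt_of_le_of_lt (le_refl _) (by linarith))
    rw [hclx] at hcoord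
    rw [abs_lt] at hcoord hg'
    rw [abs_lt]
    constructor <;> linarith

end
end SeqAscoliAux

theorem sequentiallyAscoli_iff_c0_maps_continuous
    (X : Type*) [TopologicalSpace X] [T35Space X] :
    IsSequentiallyAscoli X ↔
      ∀ T : X → C₀(ℕ, ℝ),
        -- `T` is k-continuous
        (∀ A : Set X, IsCompact A → ContinuousOn T A) →
        -- `T` is bounded
        (∃ C : ℝ, ∀ x : X, ‖T x‖ ≤ C) →
        -- `T` is weakly continuous
        (Continuous fun x => toWeakSpace ℝ C₀(ℕ, ℝ) (T x)) →
        Continuous T := by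
  constructor
  · intro hA T hk _ hw
    exact SeqAscoliAux.forward X hA T hk hw
  · exact SeqAscoliAux.backward X
end

section
/- Let X be a Tychonoff (completely regular Hausdorff) Ascoli space, Γ a set, and T : X → ℓ∞(Γ) a map such that each coordinate function f_γ : x ↦ T(x)(γ) is continuous on X. If there is a compact subset K of C_k(X) such that {f_γ : γ ∈ Γ} is contained in the closure in C_k(X) of the absolutely convex hull of K, then T is continuous (into ℓ∞(Γ) with the sup-norm topology). -/
universe u

theorem continuous_into_ellInfty_of_ascoli
    (X : Type*) [TopologicalSpace X] [T35Space X] (hX : IsAscoli X)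
    (Γ : Type u) (T : X → lp (fun _ : Γ => ℝ) ⊤)
    -- each coordinate function `x ↦ T x γ` is continuous
    (hcoord : ∀ γ : Γ, Continuous fun x => T x γ)
    -- the coordinate functions lie in the closure of the absolutely convex hull
    -- of a compact subset `K` of `C_k(X)`
    (K : Set C(X, ℝ)) (hK : IsCompact K)
    (hsub : ∀ γ : Γ, ∃ g ∈ closure (absConvexHullOf K), ∀ x : X, g x = T x γ) :
    Continuous T := by
  rw [Metric.continuous_iff']
  intro x₀ ε hε
  have hKeq := hX K hK x₀
  have hU : {p : ℝ × ℝ | dist p.1 p.2 < ε / 4} ∈ uniformity ℝ :=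
    Metric.dist_mem_uniformity (by positivity)
  have hV := hKeq _ hU
  filter_upwards [hV] with x hx
  -- members of K move little
  have hKb : ∀ f ∈ K, |f x - f x₀| ≤ ε / 4 := by
    intro f hf
    have := hx ⟨f, hf⟩
    simp only [Set.mem_setOf_eq, Real.dist_eq] at this
    rw [abs_sub_comm]
    exact this.le
  -- members of the absolutely convex hull move little
  have hhull : ∀ g ∈ absConvexHullOf K, |g x - g x₀| ≤ ε / 4 := by
    rintro g ⟨n, c, f, hfK, hc, rfl⟩
    simp only [ContinuousMap.coe_sum, ContinuousMap.coe_smul, Finset.sum_apply,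
      Pi.smul_apply, smul_eq_mul]
    rw [← Finset.sum_sub_distrib]
    calc |∑ i, (c i * f i x - c i * f i x₀)| ≤ ∑ i, |c i * f i x - c i * f i x₀| :=
          Finset.abs_sum_le_sum_abs _ _
      _ = ∑ i, |c i| * |f i x - f i x₀| := by
          simp [← mul_sub, abs_mul]
      _ ≤ ∑ i, |c i| * (ε / 4) := by
          gcongr with i
          exact hKb _ (hfK i)
      _ = (∑ i, |c i|) * (ε / 4) := by rw [Finset.sum_mul]
      _ ≤ 1 * (ε / 4) :=
          mul_le_mul_of_nonneg_right hc (by positivity)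
      _ = ε / 4 := one_mul _
  -- closed condition passes to the closure
  have hclosed : IsClosed {g : C(X, ℝ) | |g x - g x₀| ≤ ε / 4} := by
    have hcont : Continuous fun g : C(X, ℝ) => |g x - g x₀| :=
      ((continuous_eval_const x).sub
        (continuous_eval_const x₀)).abs
    exact isClosed_le hcont continuous_const
  have hcl : ∀ g ∈ closure (absConvexHullOf K), |g x - g x₀| ≤ ε / 4 :=
    closure_minimal hhull hclosed
  -- coordinatewise bound
  have hcoordb : ∀ γ : Γ, ‖(T x - T x₀) γ‖ ≤ ε / 4 := by
    intro γ
    obtain ⟨g, hg, hgT⟩ := hsub γ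
    have : (T x - T x₀) γ = g x - g x₀ := by
      simp [lp.coeFn_sub, hgT x, hgT x₀]
    rw [this]
    exact hcl g hg
  have : ‖T x - T x₀‖ ≤ ε / 4 :=
    lp.norm_le_of_forall_le (by positivity) hcoordb
  calc dist (T x) (T x₀) = ‖T x - T x₀‖ := dist_eq_norm _ _
    _ ≤ ε / 4 := this
    _ < ε := by linarith
end

section
/- Let X be a Tychonoff (completely regular Hausdorff) sequentially Ascoli space, Γ a set, and T : X → ℓ∞(Γ) a map such that each coordinate function f_γ : x ↦ T(x)(γ) is continuous on X. If there is a sequence (g_n) in C(X,ℝ) converging to 0 in C_k(X) such that {f_γ : γ ∈ Γ} is contained in the closure in C_k(X) of the absolutely convex hull of {g_n : n ∈ ℕ}, then T is continuous (into ℓ∞(Γ) with the sup-norm topology). -/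
universe u

theorem continuous_into_ellInfty_of_sequentiallyAscoli
    (X : Type*) [TopologicalSpace X] [T35Space X] (hX : IsSequentiallyAscoli X)
    (Γ : Type u) (T : X → lp (fun _ : Γ => ℝ) ⊤)
    -- each coordinate function `x ↦ T x γ` is continuous
    (hcoord : ∀ γ : Γ, Continuous fun x => T x γ)
    -- the coordinate functions lie in the closure of the absolutely convex hull
    -- of the range of a null sequence `(g_n)` in `C_k(X)`
    (g : ℕ → C(X, ℝ)) (hg : Filter.Tendsto g Filter.atTop (nhds (0 : C(X, ℝ))))
    (hsub : ∀ γ : Γ, ∃ h ∈ closure (absConvexHullOf (Set.range g)), ∀ x : X, h x = T x γ) :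
    Continuous T := by
  have hequi : Equicontinuous fun n => ⇑(g n) := hX g 0 hg
  rw [continuous_iff_continuousAt]
  intro x₀
  rw [ContinuousAt, Metric.tendsto_nhds]
  intro ε hε
  have h2 : (0:ℝ) < ε/2 := by linarith
  obtain ⟨U, hU, hUest⟩ : ∃ U ∈ nhds x₀, ∀ x ∈ U, ∀ n, |g n x - g n x₀| ≤ ε/2 := by
    have h1 := hequi x₀
    rw [Metric.equicontinuousAt_iff_right] at h1
    obtain ⟨U, hU, hU'⟩ := (h1 (ε/2) h2).exists_mem
    exact ⟨U, hU, fun x hx n => by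
      have := hU' x hx n; rw [Real.dist_eq, abs_sub_comm] at this; linarith⟩
  -- the closed set of functions with small oscillation on U
  set C : Set C(X, ℝ) := {f | ∀ x ∈ U, |f x - f x₀| ≤ ε/2} with hC
  have hclosed : IsClosed C := by
    have : C = ⋂ x ∈ U, {f : C(X, ℝ) | |f x - f x₀| ≤ ε/2} := by
      ext f; simp [hC, Set.mem_iInter]
    rw [this]
    refine isClosed_biInter fun x _ => ?_
    have hcont : Continuous fun f : C(X, ℝ) => |f x - f x₀| :=
      ((continuous_eval_const x).sub
        (continuous_eval_const x₀)).abs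
    exact isClosed_Iic.preimage hcont
  have hhull : absConvexHullOf (Set.range g) ⊆ C := by
    rintro h ⟨n, c, f, hf, hc, rfl⟩ x hx
    have hfx : ∀ i, |f i x - f i x₀| ≤ ε/2 := by
      intro i
      obtain ⟨m, hm⟩ := hf i
      rw [← hm]
      exact hUest x hx m
    calc |(∑ i, c i • f i) x - (∑ i, c i • f i) x₀|
        = |∑ i, c i * (f i x - f i x₀)| := by
          simp [ContinuousMap.sum_apply, mul_sub, Finset.sum_sub_distrib]
      _ ≤ ∑ i, |c i * (f i x - f i x₀)| := Finset.abs_sum_le_sum_abs _ _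
      _ ≤ ∑ i, |c i| * (ε/2) := by
          refine Finset.sum_le_sum fun i _ => ?_
          rw [abs_mul]
          exact mul_le_mul_of_nonneg_left (hfx i) (abs_nonneg _)
      _ = (∑ i, |c i|) * (ε/2) := by rw [Finset.sum_mul]
      _ ≤ 1 * (ε/2) := by
          exact mul_le_mul_of_nonneg_right hc (le_of_lt h2)
      _ = ε/2 := one_mul _
  have hcl : closure (absConvexHullOf (Set.range g)) ⊆ C :=
    closure_minimal hhull hclosed
  -- conclude
  filter_upwards [hU] with x hx
  have hbound : ∀ γ : Γ, |T x γ - T x₀ γ| ≤ ε/2 := by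
    intro γ
    obtain ⟨h, hmem, heq⟩ := hsub γ
    have := hcl hmem x hx
    rwa [heq x, heq x₀] at this
  have : dist (T x) (T x₀) ≤ ε/2 := by
    rw [dist_eq_norm]
    refine lp.norm_le_of_forall_le (le_of_lt h2) fun γ => ?_
    have : (T x - T x₀) γ = T x γ - T x₀ γ := rfl
    rw [this, Real.norm_eq_abs]
    exact hbound γ
  linarith
end
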